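/- Let A, B ∈ SL(2,ℂ) with tr(A) = 2, tr(B) = 2, A ≠ 1, B ≠ 1, and let ν = tr(AB) − 2. If ν ≠ 0, then there exists M ∈ SL(2,ℂ) such that M·A·M⁻¹ = X and M·B·M⁻¹ = Y_ν. -/

import Mathlib

open Matrix

noncomputable def X : Matrix.SpecialLinearGroup (Fin 2) ℂ :=
  ⟨!![1, 1; 0, 1], by simp [Matrix.det_fin_two_of]⟩

noncomputable def Y (μ : ℂ) : Matrix.SpecialLinearGroup (Fin 2) ℂ :=
  ⟨!![1, 0; μ, 1], by simp [Matrix.det_fin_two_of]⟩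

private lemma fin_two_ext' {α : Type*} {w x y z w' x' y' z' : α}
    (h1 : w = w') (h2 : x = x') (h3 : y = y') (h4 : z = z') :
    !![w, x; y, z] = !![w', x'; y', z'] := by
  subst h1 h2 h3 h4; rfl

/-- A pair of nontrivial parabolics A, B with tr(AB) − 2 = ν ≠ 0 is simultaneously conjugate
to the pair (X, Y_ν). -/
theorem conj_to_riley_generators (A B : Matrix.SpecialLinearGroup (Fin 2) ℂ)
    (hA : Matrix.trace (A : Matrix (Fin 2) (Fin 2) ℂ) = 2)
    (hB : Matrix.trace (B : Matrix (Fin 2) (Fin 2) ℂ) = 2)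
    (hA1 : A ≠ 1) (hB1 : B ≠ 1) (ν : ℂ)
    (hν : ν = Matrix.trace ((A * B : Matrix.SpecialLinearGroup (Fin 2) ℂ) :
        Matrix (Fin 2) (Fin 2) ℂ) - 2)
    (hν0 : ν ≠ 0) :
    ∃ M : Matrix.SpecialLinearGroup (Fin 2) ℂ,
      M * A * M⁻¹ = X ∧ M * B * M⁻¹ = Y ν := by
  have detA := A.2
  have detB := B.2
  rw [Matrix.det_fin_two] at detA detB
  rw [Matrix.trace_fin_two] at hA hB
  obtain ⟨a, ha⟩ : ∃ x, (A : Matrix (Fin 2) (Fin 2) ℂ) 0 0 = 1 + x :=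
    ⟨(A : Matrix (Fin 2) (Fin 2) ℂ) 0 0 - 1, by ring⟩
  obtain ⟨p, hp⟩ : ∃ x, (B : Matrix (Fin 2) (Fin 2) ℂ) 0 0 = 1 + x :=
    ⟨(B : Matrix (Fin 2) (Fin 2) ℂ) 0 0 - 1, by ring⟩
  set b := (A : Matrix (Fin 2) (Fin 2) ℂ) 0 1 with hbdef
  set c := (A : Matrix (Fin 2) (Fin 2) ℂ) 1 0 with hcdef
  set q := (B : Matrix (Fin 2) (Fin 2) ℂ) 0 1 with hqdef
  set r := (B : Matrix (Fin 2) (Fin 2) ℂ) 1 0 with hrdef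
  have ha' : (A : Matrix (Fin 2) (Fin 2) ℂ) 1 1 = 1 - a := by linear_combination hA - ha
  have hp' : (B : Matrix (Fin 2) (Fin 2) ℂ) 1 1 = 1 - p := by linear_combination hB - hp
  have hAm : (A : Matrix (Fin 2) (Fin 2) ℂ) = !![1 + a, b; c, 1 - a] := by
    ext i j
    fin_cases i <;> fin_cases j <;> simp [ha, ha', hbdef, hcdef]
  have hBm : (B : Matrix (Fin 2) (Fin 2) ℂ) = !![1 + p, q; r, 1 - p] := by
    ext i j
    fin_cases i <;> fin_cases j <;> simp [hp, hp', hqdef, hrdef]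
  rw [ha, ha'] at detA
  rw [hp, hp'] at detB
  have hA2 : a ^ 2 + b * c = 0 := by linear_combination -detA
  have hB2 : p ^ 2 + q * r = 0 := by linear_combination -detB
  have hν' : ν = 2 * a * p + b * r + c * q := by
    rw [hν, Matrix.trace_fin_two]
    simp only [Matrix.SpecialLinearGroup.coe_mul, hAm, hBm, Matrix.mul_apply,
      Fin.sum_univ_two]
    simp
    ring
  have hXm : (X : Matrix (Fin 2) (Fin 2) ℂ) = !![1, 1; 0, 1] := rfl
  have hYm : (Y ν : Matrix (Fin 2) (Fin 2) ℂ) = !![1, 0; ν, 1] := rfl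
  by_cases hq : q = 0
  · -- then p = 0 as well
    have hp0 : p = 0 := by
      have h2 : p ^ 2 = 0 := by linear_combination hB2 - r * hq
      exact pow_eq_zero_iff (n := 2) (by norm_num) |>.mp h2
    have hb0 : b ≠ 0 := by
      intro h
      apply hν0
      rw [hν', hp0, hq, h]; ring
    obtain ⟨t, ht⟩ := IsAlgClosed.exists_pow_nat_eq (k := ℂ) b⁻¹ (n := 2) (by norm_num)
    have ht' : t ^ 2 * b = 1 := by rw [ht]; field_simp
    set P : Matrix.SpecialLinearGroup (Fin 2) ℂ :=
      ⟨!![t * b, 0; -(t * a), t], by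
        rw [Matrix.det_fin_two_of]; linear_combination ht'⟩ with hP
    have hPm : (P : Matrix (Fin 2) (Fin 2) ℂ) = !![t * b, 0; -(t * a), t] := rfl
    have h1 : A * P = P * X := by
      apply Subtype.ext
      simp only [Matrix.SpecialLinearGroup.coe_mul]
      rw [hAm, hXm]
      rw [Matrix.mul_fin_two, Matrix.mul_fin_two]
      refine fin_two_ext' ?_ ?_ ?_ ?_
      · ring
      · ring
      · linear_combination t * hA2
      · ring
    have h2 : B * P = P * Y ν := by
      apply Subtype.ext
      simp only [Matrix.SpecialLinearGroup.coe_mul]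
      rw [hBm, hYm]
      rw [Matrix.mul_fin_two, Matrix.mul_fin_two]
      refine fin_two_ext' ?_ ?_ ?_ ?_
      · linear_combination (t * b) * hp0 - (t * a) * hq
      · linear_combination t * hq
      · linear_combination (-t) * hν' + (-(t * a)) * hp0 + (-(t * c)) * hq
      · linear_combination (-t) * hp0
    refine ⟨P⁻¹, ?_, ?_⟩
    · rw [inv_inv, mul_assoc, h1, ← mul_assoc, inv_mul_cancel, one_mul]
    · rw [inv_inv, mul_assoc, h2, ← mul_assoc, inv_mul_cancel, one_mul]
  · have hδ : (-(q * ν)) ≠ 0 := by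
      simp only [neg_ne_zero]
      exact mul_ne_zero hq hν0
    obtain ⟨t, ht⟩ := IsAlgClosed.exists_pow_nat_eq (k := ℂ) (-(q * ν))⁻¹ (n := 2) (by norm_num)
    have ht' : t ^ 2 * (-(q * ν)) = 1 := by rw [ht]; field_simp
    set P : Matrix.SpecialLinearGroup (Fin 2) ℂ :=
      ⟨!![t * (a * q - b * p), t * q; t * (c * q + a * p), -(t * p)], by
        rw [Matrix.det_fin_two_of]
        linear_combination ht' + (t ^ 2 * b) * hB2 + (t ^ 2 * q) * hν'⟩ with hP
    have hPm : (P : Matrix (Fin 2) (Fin 2) ℂ) =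
        !![t * (a * q - b * p), t * q; t * (c * q + a * p), -(t * p)] := rfl
    have h1 : A * P = P * X := by
      apply Subtype.ext
      simp only [Matrix.SpecialLinearGroup.coe_mul]
      rw [hAm, hXm]
      rw [Matrix.mul_fin_two, Matrix.mul_fin_two]
      refine fin_two_ext' ?_ ?_ ?_ ?_
      · linear_combination (t * q) * hA2
      · ring
      · linear_combination (-(t * p)) * hA2
      · ring
    have h2 : B * P = P * Y ν := by
      apply Subtype.ext
      simp only [Matrix.SpecialLinearGroup.coe_mul]
      rw [hBm, hYm]
      rw [Matrix.mul_fin_two, Matrix.mul_fin_two]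
      refine fin_two_ext' ?_ ?_ ?_ ?_
      · linear_combination (-(t * b)) * hB2 + (-(t * q)) * hν'
      · ring
      · linear_combination (t * a) * hB2 + (t * p) * hν'
      · linear_combination t * hB2
    refine ⟨P⁻¹, ?_, ?_⟩
    · rw [inv_inv, mul_assoc, h1, ← mul_assoc, inv_mul_cancel, one_mul]
    · rw [inv_inv, mul_assoc, h2, ← mul_assoc, inv_mul_cancel, one_mul]
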